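/- Let X, Z be the 2 × 2 Pauli matrices with real powers Z^t = diag(1, e^{iπt}) and X^t = H Z^t H. Define the Gray-code map g : {0,1}² → {0,1,2,3} by g(0,0) = 0, g(0,1) = 1, g(1,1) = 2, g(1,0) = 3. Given four bits a⁰₀, a⁰₁, a¹₀, a¹₁ ∈ {0,1}, set e_j = g(a⁰_j, a¹_j) for j = 0,1 and define Alice's encoded state |ψ_enc⟩ = ((√X)^{e₀}(√Z)^{e₁} ⊗ I)|ψ⁺⟩ = (X^{e₀/2} Z^{e₁/2} ⊗ I)|ψ⁺⟩, and Bob's decoding vectors |φ^c_{b₀,b₁}⟩ = (X^{(−1)^c b₀ + (1−2c)/4} Z^{(−1)^c b₁ + (1−2c)/4} ⊗ I)|ψ⁺⟩ for c, b₀, b₁ ∈ {0,1}. Then for every choice bit c ∈ {0,1} and all input bits, the probability of correct decoding equals |⟨φ^c_{a^c₀, a^c₁}|ψ_enc⟩|² = (3 + 2√2)/8. Consequently, for this protocol the minimum and average success probabilities of the QRAC-SE task 2₄ → (1₂, 1₂) coincide and equal (3 + 2√2)/8 ≈ 0.728. -/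

import Mathlib

open Matrix Kronecker BigOperators Complex

noncomputable section

/-- The maximally entangled state `|ψ⁺⟩ = (1/√2)(|00⟩ + |11⟩)` on `ℂ² ⊗ ℂ²`. -/
def mes2 : Fin 2 × Fin 2 → ℂ :=
  fun p => if p.1 = p.2 then ((1 / Real.sqrt 2 : ℝ) : ℂ) else 0

/-- The Hadamard matrix `H = (1/√2)[[1,1],[1,−1]]`. -/
def Hm : Matrix (Fin 2) (Fin 2) ℂ :=
  ((1 / Real.sqrt 2 : ℝ) : ℂ) • !![1, 1; 1, -1]

/-- Real powers of the Pauli `Z`: `Z^t = diag(1, e^{iπt})`. -/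
def Zpow (t : ℝ) : Matrix (Fin 2) (Fin 2) ℂ :=
  !![1, 0; 0, Complex.exp (Real.pi * t * Complex.I)]

/-- Real powers of the Pauli `X`: `X^t = H Z^t H`. -/
def Xpow (t : ℝ) : Matrix (Fin 2) (Fin 2) ℂ :=
  Hm * Zpow t * Hm

-- helper lemmas
def E (r : ℝ) : ℂ := Complex.exp (Real.pi * r * Complex.I)

lemma E_ne_zero (r : ℝ) : E r ≠ 0 := Complex.exp_ne_zero _
lemma E_mul_E (a b : ℝ) : E a * E b = E (a + b) := by
  rw [E, E, E, ← Complex.exp_add]; push_cast; ring_nf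
lemma conj_E (r : ℝ) : (starRingEnd ℂ) (E r) = E (-r) := by
  rw [E, E, ← Complex.exp_conj]
  push_cast
  simp only [_root_.map_mul, Complex.conj_I, Complex.conj_ofReal]
  ring_nf

lemma sqrt2_sq : ((Real.sqrt 2 : ℝ) : ℂ) * ((Real.sqrt 2 : ℝ) : ℂ) = 2 := by
  rw [← Complex.ofReal_mul, Real.mul_self_sqrt (by norm_num)]; norm_num
lemma sqrt2_ne : ((Real.sqrt 2 : ℝ) : ℂ) ≠ 0 := by
  simp [Real.sqrt_eq_zero']

lemma XZ_entries (s t : ℝ) :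
    Xpow s * Zpow t
      = ((1:ℂ)/2) • !![1 + E s, (1 - E s) * E t; 1 - E s, (1 + E s) * E t] := by
  have h2 := sqrt2_sq
  have hne := sqrt2_ne
  ext i j
  fin_cases i <;> fin_cases j <;>
    · simp [Xpow, Zpow, Hm, Matrix.mul_apply, Fin.sum_univ_two, E]
      field_simp
      rw [sq, h2]; ring
      try tauto

lemma inner_kron (A B : Matrix (Fin 2) (Fin 2) ℂ) :
    star ((B ⊗ₖ (1 : Matrix (Fin 2) (Fin 2) ℂ)).mulVec mes2) ⬝ᵥ
      ((A ⊗ₖ (1 : Matrix (Fin 2) (Fin 2) ℂ)).mulVec mes2)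
      = (starRingEnd ℂ (B 0 0) * A 0 0 + starRingEnd ℂ (B 0 1) * A 0 1 +
         starRingEnd ℂ (B 1 0) * A 1 0 + starRingEnd ℂ (B 1 1) * A 1 1) / 2 := by
  have h2 := sqrt2_sq
  have hne := sqrt2_ne
  simp [dotProduct, Fintype.sum_prod_type, Fin.sum_univ_two, Matrix.mulVec,
    Matrix.kroneckerMap_apply, Matrix.one_apply, mes2, Complex.conj_ofReal]
  field_simp
  rw [sq, sqrt2_sq]; ring

lemma overlap_formula (s t s' t' : ℝ) :
    star (((Xpow s * Zpow t) ⊗ₖ (1 : Matrix (Fin 2) (Fin 2) ℂ)).mulVec mes2) ⬝ᵥ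
      (((Xpow s' * Zpow t') ⊗ₖ (1 : Matrix (Fin 2) (Fin 2) ℂ)).mulVec mes2)
    = (1 + E (s' - s)) * (1 + E (t' - t)) / 4 := by
  rw [inner_kron, XZ_entries, XZ_entries,
    show s' - s = s' + -s by ring, show t' - t = t' + -t by ring, ← E_mul_E, ← E_mul_E]
  simp only [Matrix.of_apply, Matrix.smul_apply, Matrix.cons_val', Matrix.cons_val_zero, Matrix.cons_val_one,
    Matrix.head_cons, Matrix.head_fin_const, Matrix.empty_val', Matrix.cons_val_fin_one,
    smul_eq_mul, _root_.map_mul, map_add, map_sub, _root_.map_one, map_div₀, map_ofNat, conj_E]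
  have E_neg : ∀ r : ℝ, E (-r) = (E r)⁻¹ := by
    intro r
    rw [inv_eq_one_div, eq_div_iff (E_ne_zero r), E_mul_E]
    simp [E]
  simp only [E_neg]
  field_simp
  ring

lemma abs_one_add_E (u : ℝ) : ‖1 + E u‖ ^ 2 = 2 + 2 * Real.cos (Real.pi * u) := by
  have hE : E u = (Real.cos (Real.pi * u) : ℂ) + (Real.sin (Real.pi * u) : ℂ) * Complex.I := by
    rw [E, show (Real.pi : ℂ) * u * Complex.I = ((Real.pi * u : ℝ) : ℂ) * Complex.I by push_cast; ring,
      Complex.exp_mul_I, Complex.ofReal_cos, Complex.ofReal_sin]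
  rw [Complex.sq_norm, hE, Complex.normSq_apply]
  simp only [Complex.add_re, Complex.add_im, Complex.one_re, Complex.one_im, Complex.mul_re,
    Complex.mul_im, Complex.I_re, Complex.I_im, Complex.ofReal_re, Complex.ofReal_im]
  nlinarith [Real.sin_sq_add_cos_sq (Real.pi * u)]

lemma key (s t s' t' : ℝ) :
    ‖star (((Xpow s * Zpow t) ⊗ₖ (1 : Matrix (Fin 2) (Fin 2) ℂ)).mulVec mes2) ⬝ᵥ
      (((Xpow s' * Zpow t') ⊗ₖ (1 : Matrix (Fin 2) (Fin 2) ℂ)).mulVec mes2)‖ ^ 2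
    = (1 + Real.cos (Real.pi * (s' - s))) * (1 + Real.cos (Real.pi * (t' - t))) / 4 := by
  rw [overlap_formula, norm_div, norm_mul, div_pow, mul_pow, abs_one_add_E, abs_one_add_E]
  norm_num
  ring

lemma cos_eq (q : ℝ) (h : q = 1/4 ∨ q = -(1/4) ∨ q = 7/4 ∨ q = 9/4) :
    Real.cos (Real.pi * q) = Real.sqrt 2 / 2 := by
  rcases h with h|h|h|h <;> subst h
  · rw [show Real.pi * (1/4) = Real.pi / 4 by ring, Real.cos_pi_div_four]
  · rw [show Real.pi * (-(1/4)) = -(Real.pi / 4) by ring, Real.cos_neg, Real.cos_pi_div_four]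
  · rw [show Real.pi * (7/4) = -(Real.pi / 4) + 2 * Real.pi by ring, Real.cos_add_two_pi,
      Real.cos_neg, Real.cos_pi_div_four]
  · rw [show Real.pi * (9/4) = Real.pi / 4 + 2 * Real.pi by ring, Real.cos_add_two_pi,
      Real.cos_pi_div_four]

lemma final (q1 q2 : ℝ) (h1 : Real.cos (Real.pi * q1) = Real.sqrt 2 / 2)
    (h2 : Real.cos (Real.pi * q2) = Real.sqrt 2 / 2) :
    (1 + Real.cos (Real.pi * q1)) * (1 + Real.cos (Real.pi * q2)) / 4
      = (3 + 2 * Real.sqrt 2) / 8 := by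
  rw [h1, h2]
  have h : Real.sqrt 2 * Real.sqrt 2 = 2 := Real.mul_self_sqrt (by norm_num)
  linear_combination h / 16

/-- Overlap `⟨ψ⁺|(X^s Z^t ⊗ I)|ψ⁺⟩`. -/
def overlap (s t : ℝ) : ℂ :=
  star mes2 ⬝ᵥ ((Xpow s * Zpow t) ⊗ₖ (1 : Matrix (Fin 2) (Fin 2) ℂ)).mulVec mes2

/-- Bob's decoding vectors
`|φ^c_{b₀,b₁}⟩ = (X^{(−1)^c b₀ + (1−2c)/4} Z^{(−1)^c b₁ + (1−2c)/4} ⊗ I)|ψ⁺⟩`. -/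
def bobVec (c b₀ b₁ : Fin 2) : Fin 2 × Fin 2 → ℂ :=
  ((Xpow ((-1 : ℝ) ^ (c : ℕ) * ((b₀ : ℕ) : ℝ) + (1 - 2 * ((c : ℕ) : ℝ)) / 4) *
      Zpow ((-1 : ℝ) ^ (c : ℕ) * ((b₁ : ℕ) : ℝ) + (1 - 2 * ((c : ℕ) : ℝ)) / 4)) ⊗ₖ
    (1 : Matrix (Fin 2) (Fin 2) ℂ)).mulVec mes2

/-- The Gray-code map `g : {0,1}² → {0,1,2,3}`,
`g(0,0) = 0, g(0,1) = 1, g(1,1) = 2, g(1,0) = 3`. -/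
def gray (a₀ a₁ : Fin 2) : ℕ :=
  if a₀ = 0 then (if a₁ = 0 then 0 else 1) else (if a₁ = 0 then 3 else 2)

/-- Alice's encoded state `|ψ_enc⟩ = (X^{e₀/2} Z^{e₁/2} ⊗ I)|ψ⁺⟩` for encoding digits
`e₀, e₁ ∈ {0,1,2,3}`. -/
def aliceEnc (e₀ e₁ : ℕ) : Fin 2 × Fin 2 → ℂ :=
  ((Xpow ((e₀ : ℝ) / 2) * Zpow ((e₁ : ℝ) / 2)) ⊗ₖ (1 : Matrix (Fin 2) (Fin 2) ℂ)).mulVec mes2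

/-- The success probability of the QRAC-SE protocol on input bits `a i j` (string `i`,
bit `j`) and choice `c`: the squared overlap of Bob's decoding vector for the correct guess
with Alice's encoded state, where `e_j = g(a⁰_j, a¹_j)`. -/
def succProb (a : Fin 2 → Fin 2 → Fin 2) (c : Fin 2) : ℝ :=
  ‖(star (bobVec c (a c 0) (a c 1)) ⬝ᵥ
      aliceEnc (gray (a 0 0) (a 1 0)) (gray (a 0 1) (a 1 1)))‖ ^ 2

/-- For every choice bit `c` and all input bits the decoding probability equals
`(3 + 2√2)/8 ≈ 0.728`; consequently the minimum and the average success probabilities of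
the QRAC-SE task `2₄ → (1₂, 1₂)` coincide and equal `(3 + 2√2)/8`. -/
theorem qracse_qubit_success :
    (∀ (a : Fin 2 → Fin 2 → Fin 2) (c : Fin 2),
        succProb a c = (3 + 2 * Real.sqrt 2) / 8) ∧
    (1 / 32 : ℝ) * ∑ c : Fin 2, ∑ a : Fin 2 → Fin 2 → Fin 2, succProb a c
        = (3 + 2 * Real.sqrt 2) / 8 := by
  have hmain : ∀ (a : Fin 2 → Fin 2 → Fin 2) (c : Fin 2),
      succProb a c = (3 + 2 * Real.sqrt 2) / 8 := by
    intro a c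
    have hb : ∀ i j : Fin 2, a i j = 0 ∨ a i j = 1 := fun i j => by omega
    have hc : c = 0 ∨ c = 1 := by omega
    rcases hc with hc|hc <;> subst hc <;>
      rcases hb 0 0 with h00|h00 <;> rcases hb 0 1 with h01|h01 <;>
      rcases hb 1 0 with h10|h10 <;> rcases hb 1 1 with h11|h11 <;>
      · simp only [succProb, h00, h01, h10, h11, bobVec, aliceEnc]
        rw [key]
        exact final _ _ (cos_eq _ (by norm_num [gray, Fin.ext_iff]))
          (cos_eq _ (by norm_num [gray, Fin.ext_iff]))
  refine ⟨hmain, ?_⟩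
  simp only [hmain, Finset.sum_const, Finset.card_univ, smul_eq_mul]
  norm_num
  ring
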